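/- For nonnegative integers n, k, the sum Σ_{m=0}^n ((1/k!)·δ^k x^m)·λ^{n-m}·S₁(n,m) equals T_{2,λ}(n,k|x) if n ≥ k and equals 0 if n < k, where δ is the central difference operator and S₁(n,m) are Stirling numbers of the first kind. -/

import Mathlib

noncomputable def T2 (lam x : ℝ) (n k : ℕ) : ℝ :=
  iteratedDeriv n (fun t : ℝ =>
    (k.factorial : ℝ)⁻¹ * (1 + lam * t) ^ (x / lam) *
      ((1 + lam * t) ^ (1 / (2 * lam)) - (1 + lam * t) ^ (-(1 / (2 * lam)))) ^ k) 0

noncomputable def cdiff (f : ℝ → ℝ) : ℝ → ℝ := fun x => f (x + 1 / 2) - f (x - 1 / 2)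

noncomputable def S1 (n k : ℕ) : ℤ :=
  (∏ i ∈ Finset.range n, (Polynomial.X - Polynomial.C (i : ℤ))).coeff k

open Finset Filter Topology Polynomial

lemma cdiff_iter_eq_fwdDiff (f : ℝ → ℝ) (k : ℕ) (x : ℝ) :
    cdiff^[k] f x = (fwdDiff (1 : ℝ))^[k] f (x - k / 2) := by
  induction k generalizing x with
  | zero => simp
  | succ k ih =>
    rw [Function.iterate_succ_apply', Function.iterate_succ_apply' (fwdDiff (1 : ℝ))]
    show cdiff^[k] f (x + 1/2) - cdiff^[k] f (x - 1/2) = _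
    rw [ih, ih]
    show _ = (fwdDiff (1:ℝ))^[k] f (x - (k+1:ℕ)/2 + 1) - (fwdDiff (1:ℝ))^[k] f (x - (k+1:ℕ)/2)
    congr 2 <;> push_cast <;> ring

lemma cdiff_iter_apply (f : ℝ → ℝ) (k : ℕ) (x : ℝ) :
    cdiff^[k] f x
      = ∑ l ∈ Finset.range (k + 1), ((-1 : ℝ) ^ (k - l) * (k.choose l)) * f (x + l - k / 2) := by
  rw [cdiff_iter_eq_fwdDiff, fwdDiff_iter_eq_sum_shift]
  refine Finset.sum_congr rfl fun l hl => ?_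
  have harg : x - (k : ℝ) / 2 + l • (1 : ℝ) = x + l - k / 2 := by
    simp [nsmul_eq_mul]; ring
  rw [harg, zsmul_eq_mul]
  push_cast
  ring

lemma cdiff_polyeval (p : Polynomial ℝ) (t : ℝ) :
    cdiff (fun s => p.eval s) t
      = (p.comp (X + C (1/2)) - p.comp (X - C (1/2))).eval t := by
  simp [cdiff, eval_comp]

lemma cdiff_zero_fun : cdiff (fun _ => (0 : ℝ)) = fun _ => 0 := by
  funext t; simp [cdiff]

lemma cdiff_iter_polyeval_eq_zero :
    ∀ (k : ℕ) (p : Polynomial ℝ), p.natDegree < k → ∀ x : ℝ,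
      cdiff^[k] (fun t => p.eval t) x = 0 := by
  intro k
  induction k with
  | zero => intro p hp; omega
  | succ k ih =>
    intro p hp x
    rw [Function.iterate_succ_apply]
    have hfun : cdiff (fun t => p.eval t)
        = fun t => (p.comp (X + C (1/2)) - p.comp (X - C (1/2))).eval t := by
      funext t; exact cdiff_polyeval p t
    rw [hfun]
    set q : Polynomial ℝ := p.comp (X + C (1/2)) - p.comp (X - C (1/2)) with hq
    by_cases hq0 : q = 0
    · rw [hq0]
      simp only [eval_zero]
      rw [Function.iterate_fixed cdiff_zero_fun]
    · rcases Nat.eq_zero_or_pos p.natDegree with hd0 | hdpos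
      · exfalso
        apply hq0
        have : p = C (p.coeff 0) := eq_C_of_natDegree_eq_zero hd0
        rw [hq, this]
        simp
      · have hp0 : p ≠ 0 := fun h => by simp [h] at hdpos
        have hd1 : (p.comp (X + C (1/2 : ℝ))).natDegree = p.natDegree := by
          rw [natDegree_comp]; simp
        have hd2 : (p.comp (X - C (1/2 : ℝ))).natDegree = p.natDegree := by
          rw [natDegree_comp]
          simp [natDegree_X_sub_C]
        have hc10 : p.comp (X + C (1/2 : ℝ)) ≠ 0 := by
          intro h; rw [h] at hd1; simp at hd1; omega
        have hc20 : p.comp (X - C (1/2 : ℝ)) ≠ 0 := by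
          intro h; rw [h] at hd2; simp at hd2; omega
        have hdeg : (p.comp (X + C (1/2 : ℝ))).degree = (p.comp (X - C (1/2 : ℝ))).degree := by
          rw [degree_eq_natDegree hc10, degree_eq_natDegree hc20, hd1, hd2]
        have hlc : (p.comp (X + C (1/2 : ℝ))).leadingCoeff
            = (p.comp (X - C (1/2 : ℝ))).leadingCoeff := by
          rw [leadingCoeff_comp (by simp), leadingCoeff_comp (by simp [natDegree_X_sub_C])]
          have h1 : (X + C (1/2 : ℝ)).leadingCoeff = 1 := by
            simpa using (monic_X_add_C (1/2 : ℝ))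
          have h2 : (X - C (1/2 : ℝ)).leadingCoeff = 1 := monic_X_sub_C (1/2 : ℝ)
          rw [h1, h2]
        have hlt : q.degree < (p.comp (X + C (1/2 : ℝ))).degree :=
          degree_sub_lt hdeg hc10 hlc
        have hnd : q.natDegree < p.natDegree := by
          have := natDegree_lt_natDegree hq0 hlt
          rwa [hd1] at this
        exact ih q (by omega) x

lemma stirling_sum_eq_prod (lam : ℝ) (hlam : lam ≠ 0) (n : ℕ) (y : ℝ) :
    ∑ m ∈ Finset.range (n + 1), (S1 n m : ℝ) * y ^ m * lam ^ (n - m)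
      = ∏ i ∈ Finset.range n, (y - i * lam) := by
  set P : Polynomial ℤ := ∏ i ∈ Finset.range n, (Polynomial.X - Polynomial.C (i : ℤ)) with hP
  set Pr : Polynomial ℝ := P.map (Int.castRingHom ℝ) with hPr
  have hcoeff : ∀ m, Pr.coeff m = (S1 n m : ℝ) := by
    intro m; rw [hPr, coeff_map]; rfl
  have hdeg : Pr.natDegree < n + 1 := by
    have h1 : P.natDegree ≤ n := by
      calc P.natDegree ≤ ∑ i ∈ Finset.range n, (Polynomial.X - Polynomial.C (i : ℤ)).natDegree :=
            natDegree_prod_le _ _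
        _ = n := by
            simp only [natDegree_X_sub_C, Finset.sum_const, smul_eq_mul, mul_one,
              Finset.card_range]
    have h2 : Pr.natDegree ≤ P.natDegree := natDegree_map_le
    omega
  have heval : Pr.eval (y / lam) = ∏ i ∈ Finset.range n, (y / lam - i) := by
    rw [hPr, hP, Polynomial.map_prod]
    rw [Polynomial.eval_prod]
    refine Finset.prod_congr rfl fun i _ => ?_
    simp
  have hsum := Polynomial.eval_eq_sum_range' hdeg (y / lam)
  have hterm : ∀ m ∈ Finset.range (n + 1),
      (S1 n m : ℝ) * y ^ m * lam ^ (n - m) = Pr.coeff m * (y / lam) ^ m * lam ^ n := by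
    intro m hm
    have hmn : m ≤ n := Nat.lt_succ_iff.mp (Finset.mem_range.mp hm)
    rw [hcoeff m]
    have hpow : lam ^ n = lam ^ (n - m) * lam ^ m := by
      rw [← pow_add]; congr 1; omega
    rw [div_pow, hpow]
    field_simp
  rw [Finset.sum_congr rfl hterm, ← Finset.sum_mul, ← hsum, heval]
  have hln : lam ^ n = ∏ _i ∈ Finset.range n, lam := by simp
  rw [hln, ← Finset.prod_mul_distrib]
  refine Finset.prod_congr rfl fun i _ => ?_
  field_simp

lemma isOpen_pos_set (lam : ℝ) : IsOpen {t : ℝ | 0 < 1 + lam * t} := by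
  have hc : Continuous fun t : ℝ => 1 + lam * t := by continuity
  exact isOpen_lt continuous_const hc

lemma iter_deriv_rpow_sum (lam : ℝ) (k : ℕ) (c r : ℕ → ℝ) (n : ℕ) :
    ∀ t : ℝ, 0 < 1 + lam * t →
      iteratedDeriv n (fun s => ∑ l ∈ Finset.range (k + 1), c l * (1 + lam * s) ^ (r l)) t
        = ∑ l ∈ Finset.range (k + 1),
            c l * (∏ i ∈ Finset.range n, (r l - i)) * lam ^ n * (1 + lam * t) ^ (r l - n) := by
  induction n with
  | zero => intro t ht; simp
  | succ n ih =>
    intro t ht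
    rw [iteratedDeriv_succ]
    have hev : iteratedDeriv n (fun s => ∑ l ∈ Finset.range (k + 1), c l * (1 + lam * s) ^ (r l))
        =ᶠ[𝓝 t] fun s => ∑ l ∈ Finset.range (k + 1),
            c l * (∏ i ∈ Finset.range n, (r l - i)) * lam ^ n * (1 + lam * s) ^ (r l - n) := by
      filter_upwards [(isOpen_pos_set lam).mem_nhds ht] with s hs using ih s hs
    rw [hev.deriv_eq]
    have hd : HasDerivAt (fun s => ∑ l ∈ Finset.range (k + 1),
          c l * (∏ i ∈ Finset.range n, (r l - i)) * lam ^ n * (1 + lam * s) ^ (r l - n))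
        (∑ l ∈ Finset.range (k + 1),
          c l * (∏ i ∈ Finset.range n, (r l - i)) * lam ^ n *
            (lam * (r l - n) * (1 + lam * t) ^ (r l - n - 1))) t := by
      apply HasDerivAt.fun_sum
      intro l _
      have h1 : HasDerivAt (fun s : ℝ => 1 + lam * s) lam t := by
        simpa using ((hasDerivAt_id t).const_mul lam).const_add 1
      exact (h1.rpow_const (Or.inl (ne_of_gt ht))).const_mul _
    rw [hd.deriv]
    refine Finset.sum_congr rfl fun l _ => ?_
    rw [Finset.prod_range_succ]
    have hexp : r l - n - 1 = r l - ((n + 1 : ℕ) : ℝ) := by push_cast; ring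
    rw [hexp]
    push_cast
    ring

lemma key_eq (lam x : ℝ) (hlam : lam ≠ 0) (k : ℕ) :
    ∀ t : ℝ, 0 < 1 + lam * t →
      (k.factorial : ℝ)⁻¹ * (1 + lam * t) ^ (x / lam) *
          ((1 + lam * t) ^ (1 / (2 * lam)) - (1 + lam * t) ^ (-(1 / (2 * lam)))) ^ k
        = ∑ l ∈ Finset.range (k + 1),
            ((k.factorial : ℝ)⁻¹ * ((-1) ^ (k - l) * (k.choose l))) *
              (1 + lam * t) ^ ((x + l - k / 2) / lam) := by
  intro t ht
  set b := 1 + lam * t with hb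
  rw [sub_pow, Finset.mul_sum]
  refine Finset.sum_congr rfl fun l hl => ?_
  have hl' : l ≤ k := Nat.lt_succ_iff.mp (Finset.mem_range.mp hl)
  have hcast : ((k - l : ℕ) : ℝ) = (k : ℝ) - l := by push_cast [hl']; ring
  have e1 : (b ^ (1 / (2 * lam))) ^ l = b ^ ((l : ℝ) / (2 * lam)) := by
    rw [← Real.rpow_natCast (b ^ (1 / (2 * lam))) l, ← Real.rpow_mul ht.le]
    congr 1; ring
  have e2 : (b ^ (-(1 / (2 * lam)))) ^ (k - l) = b ^ (-(((k : ℝ) - l) / (2 * lam))) := by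
    rw [← Real.rpow_natCast (b ^ (-(1 / (2 * lam)))) (k - l), ← Real.rpow_mul ht.le, hcast]
    congr 1; ring
  have e3 : b ^ (x / lam) * (b ^ ((l : ℝ) / (2 * lam)) * b ^ (-(((k : ℝ) - l) / (2 * lam))))
      = b ^ ((x + l - k / 2) / lam) := by
    rw [← Real.rpow_add ht, ← Real.rpow_add ht]
    congr 1; field_simp; ring
  have hsign : ((-1 : ℝ)) ^ (l + k) = (-1) ^ (k - l) := by
    rw [show l + k = (k - l) + 2 * l by omega, pow_add, pow_mul]
    simp
  rw [e1, e2, hsign, ← e3]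
  ring

lemma T2_eq (lam x : ℝ) (hlam : lam ≠ 0) (n k : ℕ) :
    T2 lam x n k = ∑ l ∈ Finset.range (k + 1),
      ((k.factorial : ℝ)⁻¹ * ((-1) ^ (k - l) * (k.choose l))) *
        ∏ i ∈ Finset.range n, (x + l - k / 2 - i * lam) := by
  have h0 : (0 : ℝ) ∈ {t : ℝ | 0 < 1 + lam * t} := by norm_num
  have hev : (fun t : ℝ =>
      (k.factorial : ℝ)⁻¹ * (1 + lam * t) ^ (x / lam) *
        ((1 + lam * t) ^ (1 / (2 * lam)) - (1 + lam * t) ^ (-(1 / (2 * lam)))) ^ k)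
      =ᶠ[𝓝 (0 : ℝ)] fun t => ∑ l ∈ Finset.range (k + 1),
          ((k.factorial : ℝ)⁻¹ * ((-1) ^ (k - l) * (k.choose l))) *
            (1 + lam * t) ^ ((x + ↑l - ↑k / 2) / lam) := by
    filter_upwards [(isOpen_pos_set lam).mem_nhds h0] with t ht using key_eq lam x hlam k t ht
  rw [T2, hev.iteratedDeriv_eq n]
  rw [iter_deriv_rpow_sum lam k _ _ n 0 (by norm_num)]
  refine Finset.sum_congr rfl fun l _ => ?_
  rw [mul_zero, add_zero, Real.one_rpow, mul_one]
  rw [mul_assoc]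
  congr 1
  have hln : lam ^ n = ∏ _i ∈ Finset.range n, lam := by simp
  rw [hln, ← Finset.prod_mul_distrib]
  refine Finset.prod_congr rfl fun i _ => ?_
  field_simp

theorem T2_poly_via_stirling_first (lam x : ℝ) (hlam : lam ≠ 0) (n k : ℕ) :
    ∑ m ∈ Finset.range (n + 1),
        ((k.factorial : ℝ)⁻¹ * cdiff^[k] (fun t => t ^ m) x) * lam ^ (n - m) * (S1 n m : ℝ)
      = if k ≤ n then T2 lam x n k else 0 := by
  have hE : ∑ m ∈ Finset.range (n + 1),
        ((k.factorial : ℝ)⁻¹ * cdiff^[k] (fun t => t ^ m) x) * lam ^ (n - m) * (S1 n m : ℝ)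
      = ∑ l ∈ Finset.range (k + 1),
          ((k.factorial : ℝ)⁻¹ * ((-1) ^ (k - l) * (k.choose l))) *
            ∏ i ∈ Finset.range n, (x + l - k / 2 - i * lam) := by
    have step1 : ∑ m ∈ Finset.range (n + 1),
          ((k.factorial : ℝ)⁻¹ * cdiff^[k] (fun t => t ^ m) x) * lam ^ (n - m) * (S1 n m : ℝ)
        = ∑ m ∈ Finset.range (n + 1), ∑ l ∈ Finset.range (k + 1),
            ((k.factorial : ℝ)⁻¹ * ((-1) ^ (k - l) * (k.choose l))) *
              ((S1 n m : ℝ) * (x + l - k / 2) ^ m * lam ^ (n - m)) := by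
      refine Finset.sum_congr rfl fun m _ => ?_
      rw [cdiff_iter_apply (fun t => t ^ m) k x, Finset.mul_sum, Finset.sum_mul, Finset.sum_mul]
      refine Finset.sum_congr rfl fun l _ => ?_
      ring
    rw [step1, Finset.sum_comm]
    refine Finset.sum_congr rfl fun l _ => ?_
    rw [← Finset.mul_sum, stirling_sum_eq_prod lam hlam n (x + l - k / 2)]
  by_cases hkn : k ≤ n
  · rw [if_pos hkn, hE, T2_eq lam x hlam n k]
  · rw [if_neg hkn, hE]
    push_neg at hkn
    set q : Polynomial ℝ := ∏ i ∈ Finset.range n, (X - C ((i : ℝ) * lam)) with hq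
    have hqdeg : q.natDegree < k := by
      have h1 : q.natDegree ≤ ∑ i ∈ Finset.range n, (X - C ((i : ℝ) * lam)).natDegree :=
        natDegree_prod_le _ _
      have h2 : ∑ i ∈ Finset.range n, (X - C ((i : ℝ) * lam)).natDegree = n := by
        simp only [natDegree_X_sub_C, Finset.sum_const, smul_eq_mul, mul_one, Finset.card_range]
      omega
    have heval : ∀ y : ℝ, q.eval y = ∏ i ∈ Finset.range n, (y - i * lam) := by
      intro y; rw [hq]; simp [Polynomial.eval_prod]
    have hkey : ∑ l ∈ Finset.range (k + 1),
          ((k.factorial : ℝ)⁻¹ * ((-1) ^ (k - l) * (k.choose l))) *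
            ∏ i ∈ Finset.range n, (x + l - k / 2 - i * lam)
        = (k.factorial : ℝ)⁻¹ * cdiff^[k] (fun t => q.eval t) x := by
      rw [cdiff_iter_apply (fun t => q.eval t) k x, Finset.mul_sum]
      refine Finset.sum_congr rfl fun l _ => ?_
      rw [heval (x + l - k / 2)]
      ring
    rw [hkey, cdiff_iter_polyeval_eq_zero k q hqdeg x, mul_zero]
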